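/- Let n ≥ 1, let h̃ : Fin n → Fin n → Fin n → ℝ be totally symmetric and trace-free, let H : Fin n → ℝ, and define c(m,i,j) = (n/(n+2))·(H(m)δ_{ij} + H(i)δ_{jm} + H(j)δ_{im}). Then Σ_{i,j,k,l,m,t} h̃(m,i,j)·h̃(m,l,i)·c(t,l,k)·c(t,k,j) = (2n²/(n+2)²)·‖h̃‖²·‖H‖² + ((n+6)·n²/(n+2)²)·Σ_{i,j,l,m} h̃(m,i,j)·h̃(m,l,i)·H(j)·H(l), where ‖h̃‖² = Σ_{m,i,j} h̃(m,i,j)² and ‖H‖² = Σ_i H(i)². -/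

import Mathlib

open BigOperators

lemma cc_key (n : ℕ) (H : Fin n → ℝ) (l j : Fin n) :
    ∑ k : Fin n, ∑ t : Fin n,
      ((H t * (if l = k then (1:ℝ) else 0) + H l * (if k = t then (1:ℝ) else 0)
          + H k * (if l = t then (1:ℝ) else 0)) *
       (H t * (if k = j then (1:ℝ) else 0) + H k * (if j = t then (1:ℝ) else 0)
          + H j * (if k = t then (1:ℝ) else 0)))
    = 2 * (∑ i, (H i)^2) * (if l = j then (1:ℝ) else 0) + ((n:ℝ)+6) * H l * H j := by
  simp only [add_mul, mul_add, Finset.sum_add_distrib, mul_ite, ite_mul, mul_one, mul_zero,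
    zero_mul, one_mul, Finset.sum_ite_eq, Finset.sum_ite_eq', Finset.mem_univ, if_true]
  rw [Finset.sum_comm]
  simp only [Finset.sum_ite_eq, Finset.sum_ite_eq', Finset.mem_univ, if_true,
    Finset.sum_add_distrib, Finset.sum_const, Finset.card_univ, Fintype.card_fin, nsmul_eq_mul]
  by_cases h : l = j <;> simp [h] <;> ring_nf

set_option maxHeartbeats 4000000 in
theorem contraction_II_c (n : ℕ) (hn : 1 ≤ n)
    (ht : Fin n → Fin n → Fin n → ℝ)
    (hsymm₁ : ∀ i j k, ht i j k = ht j i k)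
    (hsymm₂ : ∀ i j k, ht i j k = ht i k j)
    (htf : ∀ k, ∑ i, ht i i k = 0)
    (H : Fin n → ℝ) :
    let c : Fin n → Fin n → Fin n → ℝ := fun m i j =>
      ((n : ℝ) / ((n : ℝ) + 2)) *
        (H m * (if i = j then (1 : ℝ) else 0) + H i * (if j = m then (1 : ℝ) else 0)
          + H j * (if i = m then (1 : ℝ) else 0))
    ∑ i, ∑ j, ∑ k, ∑ l, ∑ m, ∑ t, ht m i j * ht m l i * c t l k * c t k j
      = (2 * (n : ℝ) ^ 2 / ((n : ℝ) + 2) ^ 2) * (∑ m, ∑ i, ∑ j, (ht m i j) ^ 2) * (∑ i, (H i) ^ 2)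
        + (((n : ℝ) + 6) * (n : ℝ) ^ 2 / ((n : ℝ) + 2) ^ 2) *
          ∑ i, ∑ j, ∑ l, ∑ m, ht m i j * ht m l i * H j * H l := by
  intro c
  set a : ℝ := (n : ℝ) / ((n : ℝ) + 2) with ha
  set S : ℝ := ∑ i, (H i)^2 with hS
  have key : ∀ l j : Fin n, ∑ k, ∑ t, c t l k * c t k j
      = a^2 * (2 * S * (if l = j then (1:ℝ) else 0) + ((n:ℝ)+6) * H l * H j) := by
    intro l j
    have := cc_key n H l j
    calc ∑ k, ∑ t, c t l k * c t k j
        = a^2 * ∑ k : Fin n, ∑ t : Fin n,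
          ((H t * (if l = k then (1:ℝ) else 0) + H l * (if k = t then (1:ℝ) else 0)
              + H k * (if l = t then (1:ℝ) else 0)) *
           (H t * (if k = j then (1:ℝ) else 0) + H k * (if j = t then (1:ℝ) else 0)
              + H j * (if k = t then (1:ℝ) else 0))) := by
          rw [Finset.mul_sum]
          refine Finset.sum_congr rfl fun k _ => ?_
          rw [Finset.mul_sum]
          refine Finset.sum_congr rfl fun t _ => ?_
          simp only [c]
          ring
      _ = a^2 * (2 * S * (if l = j then (1:ℝ) else 0) + ((n:ℝ)+6) * H l * H j) := by
          rw [this]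
  have main : ∑ i, ∑ j, ∑ k, ∑ l, ∑ m, ∑ t, ht m i j * ht m l i * c t l k * c t k j
      = ∑ i, ∑ j, ∑ l, ∑ m, ht m i j * ht m l i *
          (a^2 * (2 * S * (if l = j then (1:ℝ) else 0) + ((n:ℝ)+6) * H l * H j)) := by
    refine Finset.sum_congr rfl fun i _ => Finset.sum_congr rfl fun j _ => ?_
    rw [Finset.sum_comm]
    refine Finset.sum_congr rfl fun l _ => ?_
    rw [Finset.sum_comm]
    refine Finset.sum_congr rfl fun m _ => ?_
    rw [← key l j, Finset.mul_sum]
    refine Finset.sum_congr rfl fun k _ => ?_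
    rw [Finset.mul_sum]
    refine Finset.sum_congr rfl fun t _ => ?_
    ring
  rw [main]
  have expand : ∑ i, ∑ j, ∑ l, ∑ m, ht m i j * ht m l i *
          (a^2 * (2 * S * (if l = j then (1:ℝ) else 0) + ((n:ℝ)+6) * H l * H j))
      = a^2 * 2 * S * (∑ i, ∑ j, ∑ m, ht m i j * ht m j i)
        + a^2 * ((n:ℝ)+6) * ∑ i, ∑ j, ∑ l, ∑ m, ht m i j * ht m l i * H j * H l := by
    have pt : ∀ i j l m : Fin n, ht m i j * ht m l i *
          (a^2 * (2 * S * (if l = j then (1:ℝ) else 0) + ((n:ℝ)+6) * H l * H j))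
        = a^2 * 2 * S * (if l = j then ht m i j * ht m l i else 0)
          + a^2 * ((n:ℝ)+6) * (ht m i j * ht m l i * H j * H l) := by
      intro i j l m
      by_cases h : l = j <;> simp [h] <;> ring
    simp only [pt, Finset.sum_add_distrib, ← Finset.mul_sum]
    congr 1
    congr 1
    refine Finset.sum_congr rfl fun i _ => Finset.sum_congr rfl fun j _ => ?_
    rw [Finset.sum_comm]
    simp only [Finset.sum_ite_eq', Finset.mem_univ, if_true]
  rw [expand]
  have sq_eq : ∑ i, ∑ j, ∑ m, ht m i j * ht m j i = ∑ m, ∑ i, ∑ j, (ht m i j)^2 := by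
    have pt2 : ∀ i j m : Fin n, ht m i j * ht m j i = (ht m i j)^2 := by
      intro i j m; rw [hsymm₂ m j i]; ring
    simp only [pt2]
    calc ∑ i, ∑ j, ∑ m, (ht m i j)^2
        = ∑ i, ∑ m, ∑ j, (ht m i j)^2 :=
          Finset.sum_congr rfl fun i _ => Finset.sum_comm
      _ = ∑ m, ∑ i, ∑ j, (ht m i j)^2 := Finset.sum_comm
  rw [sq_eq]
  have ha2 : a^2 = (n:ℝ)^2 / ((n:ℝ)+2)^2 := by
    rw [ha, div_pow]
  rw [ha2]
  ring
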